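/- Let a, b be Drazin invertible in a ring in which 2 is a unit, with a³b = ba and b³a = ab. Then a + b is Drazin invertible and (a+b)^D = (1/8)·b·b^D·(3a³ + 3b³ − a − b)·a·a^D + a^D·(1 − b·b^D) + (1 − a·a^D)·b^D. -/

import Mathlib

section Helpers
variable {R : Type*} [Ring R]

lemma h_xe (a x : R) (hxax : x * a * x = x) : ∀ n : ℕ, x * (a * x) ^ n = x := by
  intro n
  induction n with
  | zero => simp
  | succ n ih => rw [pow_succ, ← mul_assoc, ih, ← mul_assoc, hxax]

lemma h_e_idem (a x : R) (hxax : x * a * x = x) : (a * x) * (a * x) = a * x := by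
  rw [mul_assoc, ← mul_assoc x a x, hxax]

lemma h_e_pow (a x : R) (hxax : x * a * x = x) : ∀ n : ℕ, (a * x) ^ (n + 1) = a * x := by
  intro n
  induction n with
  | zero => simp
  | succ n ih => rw [pow_succ, ih, h_e_idem a x hxax]

lemma h_xpow (a x : R) (hxax : x * a * x = x) (hax : a * x = x * a) :
    ∀ n : ℕ, x ^ (n + 1) * a ^ n = x := by
  intro n
  have hc : Commute x a := hax.symm
  calc x ^ (n+1) * a ^ n = x * (x ^ n * a ^ n) := by rw [pow_succ', mul_assoc]
  _ = x * (x * a) ^ n := by rw [hc.mul_pow]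
  _ = x * (a * x) ^ n := by rw [← hax]
  _ = x := h_xe a x hxax n

lemma h_xpow' (a x : R) (hxax : x * a * x = x) (hax : a * x = x * a) :
    ∀ n : ℕ, a ^ n * x ^ (n + 1) = x := by
  intro n
  have hc : Commute x a := hax.symm
  rw [← (hc.pow_pow (n+1) n).eq, h_xpow a x hxax hax]

lemma h_shift (a x : R) (k : ℕ) (hk : a ^ (k + 1) * x = a ^ k) :
    ∀ n, k ≤ n → a ^ (n + 1) * x = a ^ n := by
  intro n hn
  induction n, hn using Nat.le_induction with
  | base => exact hk
  | succ n hn ih =>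
    rw [pow_succ', mul_assoc, ih, ← pow_succ']

lemma h_shift_many (a x : R) (k : ℕ) (hk : a ^ (k + 1) * x = a ^ k) :
    ∀ (j i : ℕ), k ≤ i → a ^ (i + j) * x ^ j = a ^ i := by
  intro j
  induction j with
  | zero => intro i _; simp
  | succ j ih =>
    intro i hi
    have h1 : a ^ (i + (j+1)) * x ^ (j+1) = (a ^ ((i+1) + j) * x ^ j) * x := by
      rw [pow_succ x j, ← mul_assoc, show i + (j+1) = (i+1)+j by omega]
    rw [h1, ih (i+1) (le_trans hi (Nat.le_succ i)), h_shift a x k hk i hi]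

lemma h_commutant (a x u : R) (hxax : x * a * x = x) (hax : a * x = x * a)
    (k : ℕ) (hk : a ^ (k + 1) * x = a ^ k) (hu : u * a = a * u) : u * x = x * u := by
  have hcu : ∀ n : ℕ, u * a ^ n = a ^ n * u := fun n =>
    ((show Commute u a from hu).pow_right n).eq
  have hcx : ∀ n : ℕ, x * a ^ n = a ^ n * x := fun n =>
    ((show Commute x a from hax.symm).pow_right n).eq
  have haek : a ^ k * (a * x) = a ^ k := by
    rw [← mul_assoc, ← pow_succ, hk]
  have heak : (a * x) * a ^ k = a ^ k := by
    rw [mul_assoc, hcx k, ← mul_assoc, ← pow_succ', hk]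
  have E1 : (x * u) * (a * x) = x * u := by
    calc (x*u)*(a*x) = ((x^(k+1) * a^k) * u) * (a*x) := by rw [h_xpow a x hxax hax k]
    _ = (x^(k+1) * (u * a^k)) * (a*x) := by rw [mul_assoc (x^(k+1)) (a^k) u, hcu k]
    _ = x^(k+1) * (u * (a^k * (a*x))) := by simp only [mul_assoc]
    _ = x^(k+1) * (u * a^k) := by rw [haek]
    _ = x^(k+1) * (a^k * u) := by rw [hcu k]
    _ = (x^(k+1) * a^k) * u := by rw [mul_assoc]
    _ = x * u := by rw [h_xpow a x hxax hax k]
  have E2 : (a * x) * (u * x) = u * x := by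
    calc (a*x)*(u*x) = (a*x) * (u * (a^k * x^(k+1))) := by rw [h_xpow' a x hxax hax k]
    _ = (a*x) * ((u * a^k) * x^(k+1)) := by rw [mul_assoc u]
    _ = (a*x) * ((a^k * u) * x^(k+1)) := by rw [hcu k]
    _ = ((a*x) * a^k) * (u * x^(k+1)) := by simp only [mul_assoc]
    _ = a^k * (u * x^(k+1)) := by rw [heak]
    _ = (u * a^k) * x^(k+1) := by rw [hcu k, mul_assoc]
    _ = u * (a^k * x^(k+1)) := by rw [mul_assoc]
    _ = u * x := by rw [h_xpow' a x hxax hax k]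
  have E3 : (x * u) * (a * x) = (a * x) * (u * x) := by
    calc (x * u) * (a * x) = x * ((u * a) * x) := by simp only [mul_assoc]
    _ = x * ((a * u) * x) := by rw [hu]
    _ = ((x * a) * u) * x := by simp only [mul_assoc]
    _ = ((a * x) * u) * x := by rw [hax]
    _ = (a * x) * (u * x) := by simp only [mul_assoc]
  calc u * x = (a*x) * (u*x) := E2.symm
  _ = (x*u) * (a*x) := E3.symm
  _ = x * u := E1

lemma h_intertwine (a x c y u : R)
    (hxax : x * a * x = x) (hax : a * x = x * a) (ka : ℕ) (hka : a ^ (ka+1) * x = a ^ ka)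
    (hycy : y * c * y = y) (hcy : c * y = y * c) (kc : ℕ) (hkc : c ^ (kc+1) * y = c ^ kc)
    (hu : u * a = c * u) : u * x = y * u := by
  set m := max ka kc with hm
  have hcu : ∀ n : ℕ, u * a ^ n = c ^ n * u := by
    intro n
    induction n with
    | zero => simp
    | succ n ih =>
      rw [pow_succ, ← mul_assoc, ih, mul_assoc, hu, ← mul_assoc, ← pow_succ]
  have hyc : ∀ n : ℕ, y * c ^ n = c ^ n * y := fun n =>
    ((show Commute y c from hcy.symm).pow_right n).eq
  have hax' : ∀ n : ℕ, a ^ n * x ^ n = (a*x) ^ n := fun n =>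
    ((show Commute a x from hax).mul_pow n).symm
  have hyc' : ∀ n : ℕ, y ^ n * c ^ n = (y*c) ^ n := fun n =>
    ((show Commute y c from hcy.symm).mul_pow n).symm
  have step2 : y * u = (c * y) * (u * x) := by
    calc y * u = (y ^ (m+1) * c ^ m) * u := by rw [h_xpow c y hycy hcy]
    _ = y ^ (m+1) * (c ^ m * u) := by rw [mul_assoc]
    _ = y ^ (m+1) * (u * a ^ m) := by rw [hcu]
    _ = y ^ (m+1) * (u * (a ^ (m+1) * x)) := by
        rw [h_shift a x ka hka m (le_max_left ka kc)]
    _ = y ^ (m+1) * ((u * a ^ (m+1)) * x) := by rw [mul_assoc u]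
    _ = y ^ (m+1) * ((c ^ (m+1) * u) * x) := by rw [hcu]
    _ = (y ^ (m+1) * c ^ (m+1)) * (u * x) := by simp only [mul_assoc]
    _ = (y * c) ^ (m+1) * (u * x) := by rw [hyc']
    _ = (c * y) ^ (m+1) * (u * x) := by rw [hcy]
    _ = (c * y) * (u * x) := by rw [h_e_pow c y hycy]
  calc u * x = u * (a ^ m * x ^ (m+1)) := by rw [h_xpow' a x hxax hax]
  _ = (u * a ^ m) * x ^ (m+1) := by rw [mul_assoc]
  _ = (c ^ m * u) * x ^ (m+1) := by rw [hcu]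
  _ = ((c ^ (m+1) * y) * u) * x ^ (m+1) := by
      rw [h_shift c y kc hkc m (le_max_right ka kc)]
  _ = ((y * c ^ (m+1)) * u) * x ^ (m+1) := by rw [hyc]
  _ = y * ((c ^ (m+1) * u) * x ^ (m+1)) := by simp only [mul_assoc]
  _ = y * ((u * a ^ (m+1)) * x ^ (m+1)) := by rw [hcu]
  _ = y * (u * (a ^ (m+1) * x ^ (m+1))) := by rw [mul_assoc]
  _ = y * (u * (a * x) ^ (m+1)) := by rw [hax']
  _ = y * (u * (a * x)) := by rw [h_e_pow a x hxax]
  _ = y * ((u * a) * x) := by rw [mul_assoc u a x]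
  _ = y * ((c * u) * x) := by rw [hu]
  _ = (y * c) * (u * x) := by simp only [mul_assoc]
  _ = (c * y) * (u * x) := by rw [hcy]
  _ = y * u := step2.symm

lemma h_nilp (a b f : R) (K : ℕ)
    (hfb : f * b = b * f)
    (hba : b * a = a ^ 3 * b)
    (haf : a ^ K * f = 0) (hbf : b ^ K * f = 0) :
    (a + b) ^ (2 * K) * f = 0 := by
  have hban : ∀ n : ℕ, b * a ^ n = a ^ (3 * n) * b := by
    intro n
    induction n with
    | zero => simp
    | succ n ih =>
      calc b * a ^ (n+1) = (b * a ^ n) * a := by rw [pow_succ, mul_assoc]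
      _ = a ^ (3*n) * (b * a) := by rw [ih, mul_assoc]
      _ = a ^ (3*n) * (a ^ 3 * b) := by rw [hba]
      _ = a ^ (3*(n+1)) * b := by rw [← mul_assoc, ← pow_add, show 3*n+3 = 3*(n+1) by ring]
  have hfbn : ∀ n : ℕ, f * b ^ n = b ^ n * f := fun n =>
    ((show Commute f b from hfb).pow_right n).eq
  set G : ℕ → Set R := fun n => {r | ∃ i j : ℕ, n ≤ i + j ∧ r = a ^ i * (b ^ j * f)} with hG
  have key : ∀ n : ℕ, (a + b) ^ n * f ∈ AddSubgroup.closure (G n) := by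
    intro n
    induction n with
    | zero =>
      refine AddSubgroup.subset_closure ?_
      exact ⟨0, 0, by omega, by simp⟩
    | succ n ih =>
      have step : ∀ r ∈ AddSubgroup.closure (G n), (a + b) * r ∈ AddSubgroup.closure (G (n+1)) := by
        intro r hr
        induction hr using AddSubgroup.closure_induction with
        | mem r hrm =>
          obtain ⟨i, j, hij, rfl⟩ := hrm
          have h1 : (a + b) * (a ^ i * (b ^ j * f)) =
              a ^ (i+1) * (b ^ j * f) + a ^ (3*i) * (b ^ (j+1) * f) := by
            rw [add_mul]
            congr 1
            · rw [← mul_assoc, ← pow_succ']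
            · rw [← mul_assoc, hban i, mul_assoc, ← mul_assoc b, ← pow_succ']
          rw [h1]
          exact add_mem (AddSubgroup.subset_closure ⟨i+1, j, by omega, rfl⟩)
            (AddSubgroup.subset_closure ⟨3*i, j+1, by omega, rfl⟩)
        | zero => rw [mul_zero]; exact (AddSubgroup.closure (G (n+1))).zero_mem
        | add r s _ _ hr hs => rw [mul_add]; exact add_mem hr hs
        | neg r _ hr => rw [mul_neg]; exact neg_mem hr
      have h2 : (a + b) ^ (n+1) * f = (a + b) * ((a + b) ^ n * f) := by
        rw [pow_succ', mul_assoc]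
      rw [h2]
      exact step _ ih
  have hzero : ∀ r ∈ G (2 * K), r = 0 := by
    rintro r ⟨i, j, hij, rfl⟩
    rcases (show K ≤ i ∨ K ≤ j by omega) with h | h
    · have h0 : a ^ i * f = 0 := by
        rw [show i = (i - K) + K by omega, pow_add, mul_assoc, haf, mul_zero]
      rw [← hfbn, ← mul_assoc, h0, zero_mul]
    · have h0 : b ^ j * f = 0 := by
        rw [show j = (j - K) + K by omega, pow_add, mul_assoc, hbf, mul_zero]
      rw [h0, mul_zero]
  have hle : AddSubgroup.closure (G (2*K)) ≤ ⊥ := by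
    rw [AddSubgroup.closure_le]
    intro r hr
    simp [hzero r hr]
  have h4 := hle (key (2*K))
  simpa using h4

end Helpers

/-- `x` is a Drazin inverse of `a`. -/
def IsDrazinInverse {R : Type*} [Ring R] (a x : R) : Prop :=
  x * a * x = x ∧ a * x = x * a ∧ ∃ k : ℕ, a ^ (k + 1) * x = a ^ k

set_option maxHeartbeats 4000000

theorem stmt19 {R : Type*} [Ring R] (a aD b bD : R)
    (haD : IsDrazinInverse a aD) (hbD : IsDrazinInverse b bD)
    (h1 : a ^ 3 * b = b * a) (h2 : b ^ 3 * a = a * b)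
    (h2u : IsUnit (2 : R)) :
    ∀ e : R, e * 8 = 1 → 8 * e = 1 →
      IsDrazinInverse (a + b)
        (e * (b * bD * (3 * a ^ 3 + 3 * b ^ 3 - a - b) * (a * aD)) +
          aD * (1 - b * bD) + (1 - a * aD) * bD) := by
  obtain ⟨hxax, hax, ka, hka⟩ := haD
  obtain ⟨hyby, hby, kb, hkb⟩ := hbD
  intro e he8 h8e
  have hba : b * a = a ^ 3 * b := h1.symm
  have hab : a * b = b ^ 3 * a := h2.symm
  -- commutes
  have hCax : Commute a aD := hax
  have hCby : Commute b bD := hby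
  have hep : (a*aD)^3 = a*aD := by simpa using h_e_pow a aD hxax 2
  have heq : (b*bD)^3 = b*bD := by simpa using h_e_pow b bD hyby 2

  -- Drazin data for a^3 and b^3
  have hx3 : aD^3 * a^3 * aD^3 = aD^3 := by
    have h3 : a^3*aD^3 = (a*aD)^3 := (hCax.mul_pow 3).symm
    rw [mul_assoc, h3, hep, pow_succ, mul_assoc, ← mul_assoc aD a aD, hxax, ← pow_succ]
  have hax3 : a^3 * aD^3 = aD^3 * a^3 := (hCax.pow_pow 3 3).eq
  have hka3 : (a^3)^(ka+1) * aD^3 = (a^3)^ka := by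
    rw [← pow_mul, ← pow_mul, show 3*(ka+1) = 3*ka+3 by ring]
    exact h_shift_many a aD ka hka 3 (3*ka) (by omega)
  have hy3 : bD^3 * b^3 * bD^3 = bD^3 := by
    have h3 : b^3*bD^3 = (b*bD)^3 := (hCby.mul_pow 3).symm
    rw [mul_assoc, h3, heq, pow_succ, mul_assoc, ← mul_assoc bD b bD, hyby, ← pow_succ]
  have hby3 : b^3 * bD^3 = bD^3 * b^3 := (hCby.pow_pow 3 3).eq
  have hkb3 : (b^3)^(kb+1) * bD^3 = (b^3)^kb := by
    rw [← pow_mul, ← pow_mul, show 3*(kb+1) = 3*kb+3 by ring]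
    exact h_shift_many b bD kb hkb 3 (3*kb) (by omega)
  -- intertwining
  have hbx : b * aD = aD^3 * b :=
    h_intertwine a aD (a^3) (aD^3) b hxax hax ka hka hx3 hax3 ka hka3 hba
  have hay : a * bD = bD^3 * a :=
    h_intertwine b bD (b^3) (bD^3) a hyby hby kb hkb hy3 hby3 kb hkb3 hab
  -- notation
  obtain ⟨p, hp⟩ : ∃ p : R, p = a * aD := ⟨_, rfl⟩
  obtain ⟨q, hq⟩ : ∃ q : R, q = b * bD := ⟨_, rfl⟩
  obtain ⟨c, hc⟩ : ∃ c : R, c = 3 * a ^ 3 + 3 * b ^ 3 - a - b := ⟨_, rfl⟩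
  have hpp : p * p = p := by rw [hp]; exact h_e_idem a aD hxax
  have hqq : q * q = q := by rw [hq]; exact h_e_idem b bD hyby
  have hpa : p * a = a * p := by rw [hp, mul_assoc, ← hax]
  have hqb : q * b = b * q := by rw [hq, mul_assoc, ← hby]
  have hpx : p * aD = aD := by rw [hp, hax, hxax]
  have hxp : aD * p = aD := by rw [hp, ← mul_assoc, hxax]
  have hqy : q * bD = bD := by rw [hq, hby, hyby]
  have hyq : bD * q = bD := by rw [hq, ← mul_assoc, hyby]
  have hpb : b * p = p * b := by
    rw [hp]
    calc b*(a*aD) = (b*a)*aD := (mul_assoc b a aD).symm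
    _ = (a^3*b)*aD := by rw [hba]
    _ = a^3*(aD^3*b) := by rw [mul_assoc, hbx]
    _ = ((a*aD)^3)*b := by rw [← mul_assoc, hCax.mul_pow]
    _ = (a*aD)*b := by rw [hep]
  have hqa : a * q = q * a := by
    rw [hq]
    calc a*(b*bD) = (a*b)*bD := (mul_assoc a b bD).symm
    _ = (b^3*a)*bD := by rw [hab]
    _ = b^3*(bD^3*a) := by rw [mul_assoc, hay]
    _ = ((b*bD)^3)*a := by rw [← mul_assoc, hCby.mul_pow]
    _ = (b*bD)*a := by rw [heq]
  have hqa' : q * a = a * q := hqa.symm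
  have hpy : p * bD = bD * p := h_commutant b bD p hyby hby kb hkb hpb.symm
  have hqx : q * aD = aD * q := h_commutant a aD q hxax hax ka hka hqa'
  have hpq : p * q = q * p := by
    rw [hq]
    calc p*(b*bD) = (p*b)*bD := (mul_assoc p b bD).symm
    _ = b*(p*bD) := by rw [← hpb, mul_assoc]
    _ = b*(bD*p) := by rw [hpy]
    _ = (b*bD)*p := (mul_assoc b bD p).symm
  obtain ⟨g, hg⟩ : ∃ g : R, g = p * q := ⟨_, rfl⟩
  have hgg : g * g = g := by
    rw [hg]
    calc (p*q)*(p*q) = p*((q*p)*q) := by simp only [mul_assoc]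
    _ = p*((p*q)*q) := by rw [hpq]
    _ = (p*p)*(q*q) := by simp only [mul_assoc]
    _ = p*q := by rw [hpp, hqq]
  have hpg : p * g = g := by rw [hg, ← mul_assoc, hpp]
  have hqg : q * g = g := by
    rw [hg]
    calc q*(p*q) = (q*p)*q := by rw [mul_assoc]
    _ = (p*q)*q := by rw [hpq]
    _ = p*(q*q) := by rw [mul_assoc]
    _ = p*q := by rw [hqq]
  have hgp : g * p = g := by
    rw [hg]
    calc (p*q)*p = p*(q*p) := by rw [mul_assoc]
    _ = p*(p*q) := by rw [hpq]
    _ = (p*p)*q := by rw [← mul_assoc, hpp]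
    _ = p*q := by rw [hpp]
  have hgq : g * q = g := by rw [hg, mul_assoc, hqq]
  have hga : g * a = a * g := by
    rw [hg]
    calc (p*q)*a = p*(q*a) := by rw [mul_assoc]
    _ = p*(a*q) := by rw [hqa']
    _ = (p*a)*q := by rw [mul_assoc]
    _ = (a*p)*q := by rw [hpa]
    _ = a*(p*q) := by rw [mul_assoc]
  have hgb : g * b = b * g := by
    rw [hg]
    calc (p*q)*b = p*(q*b) := by rw [mul_assoc]
    _ = p*(b*q) := by rw [hqb]
    _ = (p*b)*q := by rw [mul_assoc]
    _ = (b*p)*q := by rw [← hpb]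
    _ = b*(p*q) := by rw [mul_assoc]
  have hgx : g * aD = aD * g := by
    have e1 : g*aD = aD*q := by rw [hg, mul_assoc, hqx, ← mul_assoc, hpx]
    have e2 : aD*g = aD*q := by rw [hg, ← mul_assoc, hxp]
    rw [e1, e2]
  have hgy : g * bD = bD * g := by
    have e1 : g*bD = p*bD := by rw [hg, mul_assoc, hqy]
    have e2 : bD*g = p*bD := by rw [hg, ← mul_assoc, ← hpy, mul_assoc, hyq]
    rw [e1, e2]
  have hpbn : ∀ n : ℕ, p * b^n = b^n * p := fun n => ((show Commute p b from hpb.symm).pow_right n).eq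
  have hpan : ∀ n : ℕ, p * a^n = a^n * p := fun n => ((show Commute p a from hpa).pow_right n).eq
  have hqan : ∀ n : ℕ, q * a^n = a^n * q := fun n => ((show Commute q a from hqa').pow_right n).eq
  have hqbn : ∀ n : ℕ, q * b^n = b^n * q := fun n => ((show Commute q b from hqb).pow_right n).eq
  have hgan : ∀ n : ℕ, g * a^n = a^n * g := fun n => ((show Commute g a from hga).pow_right n).eq
  have hgbn : ∀ n : ℕ, g * b^n = b^n * g := fun n => ((show Commute g b from hgb).pow_right n).eq
  have mba : ∀ n : ℕ, b * a^n = a^(3*n) * b := by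
    intro n
    induction n with
    | zero => simp
    | succ n ih =>
      calc b * a ^ (n+1) = (b * a ^ n) * a := by rw [pow_succ, mul_assoc]
      _ = a ^ (3*n) * (b * a) := by rw [ih, mul_assoc]
      _ = a ^ (3*n) * (a ^ 3 * b) := by rw [hba]
      _ = a ^ (3*(n+1)) * b := by rw [← mul_assoc, ← pow_add, show 3*n+3 = 3*(n+1) by ring]
  have mab : ∀ n : ℕ, a * b^n = b^(3*n) * a := by
    intro n
    induction n with
    | zero => simp
    | succ n ih =>
      calc a * b ^ (n+1) = (a * b ^ n) * b := by rw [pow_succ, mul_assoc]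
      _ = b ^ (3*n) * (a * b) := by rw [ih, mul_assoc]
      _ = b ^ (3*n) * (b ^ 3 * a) := by rw [hab]
      _ = b ^ (3*(n+1)) * a := by rw [← mul_assoc, ← pow_add, show 3*n+3 = 3*(n+1) by ring]
  have hsa : ∀ n, ka ≤ n → a^(n+1)*aD = a^n := h_shift a aD ka hka
  have hsb : ∀ n, kb ≤ n → b^(n+1)*bD = b^n := h_shift b bD kb hkb
  have hbnq : ∀ n, kb ≤ n → b^n * q = b^n := by
    intro n hn; rw [hq, ← mul_assoc, ← pow_succ, hsb n hn]
  have hanp : ∀ n, ka ≤ n → a^n * p = a^n := by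
    intro n hn; rw [hp, ← mul_assoc, ← pow_succ, hsa n hn]
  -- b annihilates p - g
  have hbm : b * (p - g) = 0 := by
    have hpm : p * (p - g) = p - g := by rw [mul_sub, hpp, hpg]
    have hma : (p-g)*a = a*(p-g) := by rw [sub_mul, mul_sub, hpa, hga]
    have hman : ∀ n : ℕ, a^n * (p-g) = (p-g) * a^n := fun n =>
      (((show Commute (p-g) a from hma).pow_right n).eq).symm
    have hrec : ∀ n : ℕ, b * (p - g) = aD ^ n * (b ^ (3^n) * (a ^ n * (p - g))) := by
      intro n
      induction n with
      | zero => simp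
      | succ n ih =>
        rw [ih]
        have key : aD^(n+1) * (b^(3^(n+1)) * (a^(n+1) * (p-g)))
            = aD^n * (b^(3^n) * (a^n * (p-g))) := by
          calc aD^(n+1) * (b^(3^(n+1)) * (a^(n+1) * (p-g)))
              = aD^n * (aD * ((b^(3*3^n) * a) * (a^n * (p-g)))) := by
                rw [pow_succ aD n, pow_succ' a n, show (3:ℕ)^(n+1) = 3*3^n from pow_succ' 3 n]
                simp only [mul_assoc]
          _ = aD^n * (aD * ((a * b^(3^n)) * (a^n * (p-g)))) := by rw [← mab (3^n)]
          _ = aD^n * ((aD * a) * (b^(3^n) * (a^n * (p-g)))) := by simp only [mul_assoc]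
          _ = aD^n * (p * (b^(3^n) * (a^n * (p-g)))) := by rw [← hax, ← hp]
          _ = aD^n * (b^(3^n) * (p * (a^n * (p-g)))) := by
                rw [← mul_assoc p, hpbn (3^n), mul_assoc]
          _ = aD^n * (b^(3^n) * (a^n * (p * (p-g)))) := by
                rw [← mul_assoc p (a^n), hpan n, mul_assoc]
          _ = aD^n * (b^(3^n) * (a^n * (p-g))) := by rw [hpm]
        exact key.symm
    have h3n : kb ≤ 3 ^ kb := le_of_lt (Nat.lt_pow_self (by norm_num : 1 < 3))
    have hbKm : b^(3^kb) * (p - g) = 0 := by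
      have e1 : b^(3^kb)*g = b^(3^kb)*p := by
        rw [hg, ← mul_assoc, ← hpbn, mul_assoc, hbnq (3^kb) h3n, hpbn]
      rw [mul_sub, e1, sub_self]
    rw [hrec kb, hman kb, ← mul_assoc (b^(3^kb)), hbKm, zero_mul, mul_zero]
  -- a annihilates q - g
  have ham : a * (q - g) = 0 := by
    have hqm : q * (q - g) = q - g := by rw [mul_sub, hqq, hqg]
    have hmb : (q-g)*b = b*(q-g) := by rw [sub_mul, mul_sub, hqb, hgb]
    have hmbn : ∀ n : ℕ, b^n * (q-g) = (q-g) * b^n := fun n =>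
      (((show Commute (q-g) b from hmb).pow_right n).eq).symm
    have hrec : ∀ n : ℕ, a * (q - g) = bD ^ n * (a ^ (3^n) * (b ^ n * (q - g))) := by
      intro n
      induction n with
      | zero => simp
      | succ n ih =>
        rw [ih]
        have key : bD^(n+1) * (a^(3^(n+1)) * (b^(n+1) * (q-g)))
            = bD^n * (a^(3^n) * (b^n * (q-g))) := by
          calc bD^(n+1) * (a^(3^(n+1)) * (b^(n+1) * (q-g)))
              = bD^n * (bD * ((a^(3*3^n) * b) * (b^n * (q-g)))) := by
                rw [pow_succ bD n, pow_succ' b n, show (3:ℕ)^(n+1) = 3*3^n from pow_succ' 3 n]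
                simp only [mul_assoc]
          _ = bD^n * (bD * ((b * a^(3^n)) * (b^n * (q-g)))) := by rw [← mba (3^n)]
          _ = bD^n * ((bD * b) * (a^(3^n) * (b^n * (q-g)))) := by simp only [mul_assoc]
          _ = bD^n * (q * (a^(3^n) * (b^n * (q-g)))) := by rw [← hby, ← hq]
          _ = bD^n * (a^(3^n) * (q * (b^n * (q-g)))) := by
                rw [← mul_assoc q, hqan (3^n), mul_assoc]
          _ = bD^n * (a^(3^n) * (b^n * (q * (q-g)))) := by
                rw [← mul_assoc q (b^n), hqbn n, mul_assoc]
          _ = bD^n * (a^(3^n) * (b^n * (q-g))) := by rw [hqm]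
        exact key.symm
    have h3n : ka ≤ 3 ^ ka := le_of_lt (Nat.lt_pow_self (by norm_num : 1 < 3))
    have haKm : a^(3^ka) * (q - g) = 0 := by
      have e1 : a^(3^ka)*g = a^(3^ka)*q := by
        rw [hg, ← mul_assoc, hanp (3^ka) h3n]
      rw [mul_sub, e1, sub_self]
    rw [hrec ka, hmbn ka, ← mul_assoc (a^(3^ka)), haKm, zero_mul, mul_zero]
  -- corner basics
  have hqp : q * p = g := by rw [← hpq, ← hg]
  have hpq' : p * q = g := hg.symm
  have hgxn : ∀ n : ℕ, g * aD^n = aD^n * g := fun n => ((show Commute g aD from hgx).pow_right n).eq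
  have hgyn : ∀ n : ℕ, g * bD^n = bD^n * g := fun n => ((show Commute g bD from hgy).pow_right n).eq
  have hpyn : ∀ n : ℕ, p * bD^n = bD^n * p := fun n => ((show Commute p bD from hpy).pow_right n).eq
  have hep25 : (a*aD)^25 = a*aD := by simpa using h_e_pow a aD hxax 24
  have cbyg : b * (bD * g) = g := by rw [← mul_assoc, ← hq, hqg]
  have cxag : aD * (a * g) = g := by rw [← mul_assoc, ← hax, ← hp, hpg]
  have c3b : b^3 * (bD^3 * g) = g := by
    calc b^3*(bD^3*g) = (b^3*bD^3)*g := by rw [mul_assoc]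
    _ = (b*bD)^3*g := by rw [hCby.mul_pow]
    _ = (b*bD)*g := by rw [heq]
    _ = g := by rw [← hq, hqg]
  have mba2 : ∀ n : ℕ, b^2 * a^n = a^(9*n) * b^2 := by
    intro n
    calc b^2*a^n = b*(b*a^n) := by rw [pow_two, mul_assoc]
    _ = b*(a^(3*n)*b) := by rw [mba n]
    _ = (b*a^(3*n))*b := by rw [mul_assoc]
    _ = (a^(9*n)*b)*b := by rw [mba (3*n), show 3*(3*n) = 9*n by ring]
    _ = a^(9*n)*b^2 := by rw [mul_assoc, ← pow_two]
  have mba3 : ∀ n : ℕ, b^3 * a^n = a^(27*n) * b^3 := by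
    intro n
    calc b^3*a^n = b*(b^2*a^n) := by rw [pow_succ', mul_assoc]
    _ = b*(a^(9*n)*b^2) := by rw [mba2 n]
    _ = (b*a^(9*n))*b^2 := by rw [mul_assoc]
    _ = (a^(27*n)*b)*b^2 := by rw [mba (9*n), show 3*(9*n) = 27*n by ring]
    _ = a^(27*n)*b^3 := by rw [mul_assoc, ← pow_succ']
  have m1 : b^3 * a = a^27 * b^3 := by simpa using mba3 1
  have G3 : a^27 * g = a * (bD^2 * g) := by
    calc a^27*g = a^27*(b^3*(bD^3*g)) := by rw [c3b]
    _ = (b^3*a)*(bD^3*g) := by rw [m1]; simp only [mul_assoc]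
    _ = (a*b)*(bD^3*g) := by rw [hab]
    _ = a*((b*bD)*(bD^2*g)) := by
        rw [show bD^(3:ℕ) = bD*bD^2 by rw [show (3:ℕ) = 2+1 by norm_num, pow_succ']]
        simp only [mul_assoc]
    _ = a*(q*(bD^2*g)) := by rw [← hq]
    _ = a*(((q*bD)*bD)*g) := by simp only [pow_two, mul_assoc]
    _ = a*((bD*bD)*g) := by rw [hqy]
    _ = a*(bD^2*g) := by rw [← pow_two]
  have G4 : a^26 * g = bD^2 * g := by
    have e0 : aD*(a^27*g) = a^26*g := by
      calc aD*(a^27*g) = aD*(a*(a^26*g)) := by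
            rw [show a^(27:ℕ) = a*a^26 by rw [show (27:ℕ) = 26+1 by norm_num, pow_succ'], mul_assoc]
      _ = (aD*a)*(a^26*g) := by rw [mul_assoc]
      _ = p*(a^26*g) := by rw [← hax, ← hp]
      _ = (p*a^26)*g := by rw [mul_assoc]
      _ = (a^26*p)*g := by rw [hpan]
      _ = a^26*g := by rw [mul_assoc, hpg]
    have e1 : aD*(a*(bD^2*g)) = bD^2*g := by
      calc aD*(a*(bD^2*g)) = (aD*a)*(bD^2*g) := by rw [mul_assoc]
      _ = p*(bD^2*g) := by rw [← hax, ← hp]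
      _ = (bD^2*p)*g := by rw [← mul_assoc, hpyn]
      _ = bD^2*g := by rw [mul_assoc, hpg]
    rw [← e0, G3, e1]
  have G5 : b^2*(a^26*g) = g := by
    calc b^2*(a^26*g) = b^2*(bD^2*g) := by rw [G4]
    _ = (b^2*bD^2)*g := by rw [mul_assoc]
    _ = (b*bD)^2*g := by rw [hCby.mul_pow]
    _ = (b*bD)*g := by rw [show (b*bD)^(2:ℕ) = b*bD by simpa using h_e_pow b bD hyby 1]
    _ = g := by rw [← hq, hqg]
  have cA026 : a^26*(aD^26*g) = g := by
    calc a^26*(aD^26*g) = (a^26*aD^26)*g := by rw [mul_assoc]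
    _ = (a*aD)^26*g := by rw [hCax.mul_pow]
    _ = (a*aD)*g := by rw [show (a*aD)^(26:ℕ) = a*aD by simpa using h_e_pow a aD hxax 25]
    _ = g := by rw [← hp, hpg]
  have G6 : a^26*(b^2*g) = g := by
    calc a^26*(b^2*g) = a^26*(b^2*(a^26*(aD^26*g))) := by rw [cA026]
    _ = a^26*(b^2*(a^26*(g*aD^26))) := by rw [hgxn]
    _ = (a^26*(b^2*(a^26*g)))*aD^26 := by simp only [mul_assoc]
    _ = (a^26*g)*aD^26 := by rw [G5]
    _ = a^26*(aD^26*g) := by rw [mul_assoc, hgxn]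
    _ = g := cA026
  have haux : a^26*aD^25 = a*(a*aD) := by
    have h26 : a^(26:ℕ) = a*a^25 := by rw [show (26:ℕ) = 25+1 by norm_num, pow_succ']
    calc a^26*aD^25 = (a*a^25)*aD^25 := by rw [h26]
    _ = a*(a^25*aD^25) := by rw [mul_assoc]
    _ = a*((a*aD)^25) := by rw [hCax.mul_pow]
    _ = a*(a*aD) := by rw [hep25]
  have haux' : aD^25*a^26 = a*(a*aD) := by
    rw [← (hCax.pow_pow 26 25).eq]; exact haux
  have cXA : ∀ t : R, aD^25*(a^26*t) = a*(p*t) := by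
    intro t
    calc aD^25*(a^26*t) = (aD^25*a^26)*t := by rw [mul_assoc]
    _ = (a*(a*aD))*t := by rw [haux']
    _ = a*(p*t) := by rw [mul_assoc, ← hp]
  have G7 : a*(b^2*g) = b^2*(a*g) := by
    have l1 : a*(b^2*g) = aD^25*g := by
      have h0 : p*(b^2*g) = b^2*g := by rw [← mul_assoc, hpbn, mul_assoc, hpg]
      calc a*(b^2*g) = a*(p*(b^2*g)) := by rw [h0]
      _ = aD^25*(a^26*(b^2*g)) := (cXA (b^2*g)).symm
      _ = aD^25*g := by rw [G6]
    have l2 : b^2*(a*g) = aD^25*g := by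
      have cAX : a^26*(aD^25*g) = a*g := by
        calc a^26*(aD^25*g) = (a^26*aD^25)*g := by rw [mul_assoc]
        _ = (a*(a*aD))*g := by rw [haux]
        _ = a*((a*aD)*g) := by simp only [mul_assoc]
        _ = a*g := by rw [← hp, hpg]
      calc b^2*(a*g) = b^2*(a^26*(aD^25*g)) := by rw [cAX]
      _ = b^2*(a^26*(g*aD^25)) := by rw [hgxn]
      _ = (b^2*(a^26*g))*aD^25 := by simp only [mul_assoc]
      _ = g*aD^25 := by rw [G5]
      _ = aD^25*g := hgxn 25
    rw [l1, l2]
  have m2a : b^2*a = a^9*b^2 := by simpa using mba2 1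
  have G8 : a^8 * g = g := by
    have eaux : a*(b^2*g) = a^9*(b^2*g) := by
      calc a*(b^2*g) = b^2*(a*g) := G7
      _ = (b^2*a)*g := by rw [mul_assoc]
      _ = (a^9*b^2)*g := by rw [m2a]
      _ = a^9*(b^2*g) := by rw [mul_assoc]
    have l1 : aD*(a*(b^2*g)) = b^2*g := by
      calc aD*(a*(b^2*g)) = (aD*a)*(b^2*g) := by rw [mul_assoc]
      _ = p*(b^2*g) := by rw [← hax, ← hp]
      _ = b^2*g := by rw [← mul_assoc, hpbn, mul_assoc, hpg]
    have h9 : a^(9:ℕ) = a*a^8 := by rw [show (9:ℕ) = 8+1 by norm_num, pow_succ']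
    have l2 : aD*(a^9*(b^2*g)) = a^8*(b^2*g) := by
      calc aD*(a^9*(b^2*g)) = aD*(a*(a^8*(b^2*g))) := by rw [h9, mul_assoc]
      _ = p*(a^8*(b^2*g)) := by rw [← mul_assoc, ← hax, ← hp]
      _ = a^8*(p*(b^2*g)) := by rw [← mul_assoc, hpan, mul_assoc]
      _ = a^8*(b^2*g) := by rw [← mul_assoc p, hpbn, mul_assoc, hpg]
    have e2 : b^2*g = a^8*(b^2*g) := by
      calc b^2*g = aD*(a*(b^2*g)) := l1.symm
      _ = aD*(a^9*(b^2*g)) := by rw [eaux]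
      _ = a^8*(b^2*g) := l2
    have cQ : b^2*(bD^2*g) = g := by
      calc b^2*(bD^2*g) = (b^2*bD^2)*g := by rw [mul_assoc]
      _ = (b*bD)^2*g := by rw [hCby.mul_pow]
      _ = (b*bD)*g := by rw [show (b*bD)^(2:ℕ) = b*bD by simpa using h_e_pow b bD hyby 1]
      _ = g := by rw [← hq, hqg]
    have r1 : (b^2*g)*bD^2 = g := by rw [mul_assoc, hgyn, cQ]
    calc a^8*g = a^8*((b^2*g)*bD^2) := by rw [r1]
    _ = (a^8*(b^2*g))*bD^2 := by rw [← mul_assoc]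
    _ = (b^2*g)*bD^2 := by rw [← e2]
    _ = g := r1
  have redA : ∀ n : ℕ, a^(n+8)*g = a^n*g := by
    intro n; rw [pow_add, mul_assoc, G8]
  have G26r : a^26*g = a^2*g := by
    calc a^26*g = a^(18+8)*g := by norm_num
    _ = a^18*g := redA 18
    _ = a^(10+8)*g := by norm_num
    _ = a^10*g := redA 10
    _ = a^(2+8)*g := by norm_num
    _ = a^2*g := redA 2
  have h18r : a^18*g = a^2*g := by
    calc a^18*g = a^(10+8)*g := by norm_num
    _ = a^10*g := redA 10
    _ = a^(2+8)*g := by norm_num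
    _ = a^2*g := redA 2
  have G10 : a^2*(b^2*g) = g := by
    calc a^2*(b^2*g) = a^2*(g*b^2) := by rw [hgbn]
    _ = (a^2*g)*b^2 := by rw [← mul_assoc]
    _ = (a^26*g)*b^2 := by rw [G26r]
    _ = a^26*(b^2*g) := by rw [mul_assoc, hgbn]
    _ = g := G6
  have hP2 : ∀ t : R, aD^2*(a^2*t) = p*t := by
    intro t
    calc aD^2*(a^2*t) = (aD^2*a^2)*t := by rw [mul_assoc]
    _ = ((aD*a)^2)*t := by rw [(show Commute aD a from hax.symm).mul_pow]
    _ = ((a*aD)*(a*aD))*t := by rw [pow_two, ← hax]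
    _ = (p*p)*t := by rw [← hp]
    _ = p*t := by rw [hpp]
  have G11 : b^2*g = aD^2*g := by
    calc b^2*g = p*(b^2*g) := by rw [← mul_assoc, hpbn, mul_assoc, hpg]
    _ = aD^2*(a^2*(b^2*g)) := (hP2 _).symm
    _ = aD^2*g := by rw [G10]
  have h8s : a^(8:ℕ) = a*a^7 := by rw [show (8:ℕ) = 7+1 by norm_num, pow_succ']
  have h7s : a^(7:ℕ) = a*a^6 := by rw [show (7:ℕ) = 6+1 by norm_num, pow_succ']
  have hxg : aD*g = a^7*g := by
    calc aD*g = aD*(a^8*g) := by rw [G8]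
    _ = aD*(a*(a^7*g)) := by rw [h8s, mul_assoc]
    _ = p*(a^7*g) := by rw [← mul_assoc, ← hax, ← hp]
    _ = a^7*(p*g) := by rw [← mul_assoc, hpan, mul_assoc]
    _ = a^7*g := by rw [hpg]
  have hx2g : aD^2*g = a^6*g := by
    calc aD^2*g = aD*(aD*g) := by rw [← mul_assoc, ← pow_two]
    _ = aD*(a^7*g) := by rw [hxg]
    _ = aD*(a*(a^6*g)) := by rw [h7s, mul_assoc]
    _ = p*(a^6*g) := by rw [← mul_assoc, ← hax, ← hp]
    _ = a^6*(p*g) := by rw [← mul_assoc, hpan, mul_assoc]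
    _ = a^6*g := by rw [hpg]
  have G12 : b^2*g = a^6*g := by rw [G11, hx2g]
  have hb3s : b^(3:ℕ) = b^2*b := by rw [show (3:ℕ) = 2+1 by norm_num, pow_succ]
  have hb3s' : b^(3:ℕ) = b*b^2 := by rw [show (3:ℕ) = 2+1 by norm_num, pow_succ']
  have wayA : b^3*(bD*g) = a^6*g := by
    calc b^3*(bD*g) = b^2*(b*(bD*g)) := by rw [hb3s, mul_assoc]
    _ = b^2*g := by rw [cbyg]
    _ = a^6*g := G12
  have mba6 : b*a^6 = a^18*b := by
    have := mba 6; norm_num at this; exact this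
  have wayB : b^3*(bD*g) = a^2*g := by
    have hb3g : b^3*g = a^2*(b*g) := by
      calc b^3*g = b*(b^2*g) := by rw [hb3s', mul_assoc]
      _ = b*(a^6*g) := by rw [G12]
      _ = (b*a^6)*g := by rw [mul_assoc]
      _ = (a^18*b)*g := by rw [mba6]
      _ = a^18*(g*b) := by rw [mul_assoc, hgb]
      _ = (a^18*g)*b := by rw [← mul_assoc]
      _ = (a^2*g)*b := by rw [h18r]
      _ = a^2*(b*g) := by rw [mul_assoc, ← hgb]
    calc b^3*(bD*g) = b^3*(g*bD) := by rw [hgy]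
    _ = (b^3*g)*bD := by rw [← mul_assoc]
    _ = (a^2*(b*g))*bD := by rw [hb3g]
    _ = a^2*(b*(g*bD)) := by simp only [mul_assoc]
    _ = a^2*(b*(bD*g)) := by rw [hgy]
    _ = a^2*g := by rw [cbyg]
  have G62 : a^6*g = a^2*g := by rw [← wayA, wayB]
  have G13 : a^4*g = g := by
    have h6s : a^(6:ℕ) = a^2*a^4 := by rw [← pow_add]
    have l1 : aD^2*(a^6*g) = a^4*g := by
      calc aD^2*(a^6*g) = aD^2*(a^2*(a^4*g)) := by rw [h6s, mul_assoc]
      _ = p*(a^4*g) := hP2 _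
      _ = a^4*(p*g) := by rw [← mul_assoc, hpan, mul_assoc]
      _ = a^4*g := by rw [hpg]
    have l2 : aD^2*(a^2*g) = g := by
      calc aD^2*(a^2*g) = p*g := hP2 g
      _ = g := hpg
    rw [← l1, G62, l2]
  have G14 : b^2*g = a^2*g := by rw [G12, G62]
  -- scalar commutation
  have h8c : ∀ t : R, (8:R)*t = t*8 := fun t => (Nat.cast_commute 8 t).symm.eq.symm
  have h3c : ∀ t : R, (3:R)*t = t*3 := fun t => (Nat.cast_commute 3 t).symm.eq.symm
  have hnum3 : ∀ u t : R, u*((3:R)*t) = 3*(u*t) := fun u t => by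
    rw [← mul_assoc, ← h3c, mul_assoc]
  have hnum8 : ∀ u t : R, u*((8:R)*t) = 8*(u*t) := fun u t => by
    rw [← mul_assoc, ← h8c, mul_assoc]
  have ecomm : ∀ t : R, e*t = t*e := by
    intro t
    calc e*t = (e*t)*(8*e) := by rw [h8e, mul_one]
    _ = e*((t*8)*e) := by simp only [mul_assoc]
    _ = e*((8*t)*e) := by rw [h8c]
    _ = ((e*8)*t)*e := by simp only [mul_assoc]
    _ = t*e := by rw [he8, one_mul]
  have emid : ∀ u t : R, u*(e*t) = e*(u*t) := fun u t => by
    rw [← mul_assoc, ← ecomm, mul_assoc]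
  -- reduction lemmas
  have ha3s : a^(3:ℕ) = a*(a*a) := by
    rw [show (3:ℕ) = 2+1 by norm_num, pow_succ', pow_two]
  have ha4s : a^(4:ℕ) = a*(a*(a*a)) := by
    rw [show (4:ℕ) = 3+1 by norm_num, pow_succ', ha3s]
  have Rb_a : ∀ t : R, b*(a*t) = a*(a*(a*(b*t))) := by
    intro t
    rw [← mul_assoc, hba, ha3s]
    simp only [mul_assoc]
  have Rb_bg : b*(b*g) = a*(a*g) := by
    have h := G14
    rw [pow_two, pow_two] at h
    simpa only [mul_assoc] using h
  have Ra4g : a*(a*(a*(a*g))) = g := by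
    have h := G13
    rw [ha4s] at h
    simpa only [mul_assoc] using h
  have Ra4bg : a*(a*(a*(a*(b*g)))) = b*g := by
    have l : a^4*(b*g) = b*g := by
      calc a^4*(b*g) = a^4*(g*b) := by rw [hgb]
      _ = (a^4*g)*b := by rw [← mul_assoc]
      _ = g*b := by rw [G13]
      _ = b*g := by rw [hgb]
    rw [ha4s] at l
    simpa only [mul_assoc] using l
  have Rg_a : ∀ t : R, g*(a*t) = a*(g*t) := fun t => by rw [← mul_assoc, hga, mul_assoc]
  have Rg_b : ∀ t : R, g*(b*t) = b*(g*t) := fun t => by rw [← mul_assoc, hgb, mul_assoc]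
  -- corner identities
  have I1 : (a+b) * ((3*a^2-1)*((a+b)*g)) = ((3*a^2-1)*((a+b)*g)) * ((a+b)*g) := by
    simp only [mul_add, add_mul, mul_sub, sub_mul, mul_one, one_mul, pow_two, mul_assoc]
    simp only [hnum3, Rb_a, Rb_bg, Ra4g, Ra4bg, Rg_a, Rg_b, hgg]
    noncomm_ring
  have I2 : ((3*a^2-1)*((a+b)*g)) * ((a+b) * ((3*a^2-1)*((a+b)*g)))
      = 8*((3*a^2-1)*((a+b)*g)) := by
    simp only [mul_add, add_mul, mul_sub, sub_mul, mul_one, one_mul, pow_two, mul_assoc]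
    simp only [hnum3, Rb_a, Rb_bg, Ra4g, Ra4bg, Rg_a, Rg_b, hgg]
    noncomm_ring
  have I3 : (a+b) * ((a+b) * ((3*a^2-1)*((a+b)*g))) = 8*((a+b)*g) := by
    simp only [mul_add, add_mul, mul_sub, sub_mul, mul_one, one_mul, pow_two, mul_assoc]
    simp only [hnum3, Rb_a, Rb_bg, Ra4g, Ra4bg, Rg_a, Rg_b, hgg]
    noncomm_ring
  -- W and its corner values
  obtain ⟨W, hW⟩ : ∃ w : R, w = e*(q*c*p) + aD*(1-q) + (1-p)*bD := ⟨_, rfl⟩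
  have hqc : q*c = c*q := by
    rw [hc]
    simp only [mul_add, add_mul, mul_sub, sub_mul, mul_assoc, hnum3, hqan, hqbn, hqa', hqb]
  have hbdg : bD*g = p*bD := by rw [hg, ← mul_assoc, ← hpy, mul_assoc, hyq]
  have hcg : c*g = (3*a^2-1)*((a+b)*g) := by
    rw [hc]
    simp only [mul_add, add_mul, mul_sub, sub_mul, mul_one, one_mul, pow_two,
      show a^(3:ℕ) = a*(a*a) from ha3s,
      show b^(3:ℕ) = b*(b*b) by rw [show (3:ℕ) = 2+1 by norm_num, pow_succ', pow_two],
      mul_assoc]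
    simp only [hnum3, Rb_a, Rb_bg, Ra4g, Ra4bg, Rg_a, Rg_b, hgg]
    noncomm_ring
  have hqcg : q*(c*g) = c*g := by rw [← mul_assoc, hqc, mul_assoc, hqg]
  have hWg : W*g = e*((3*a^2-1)*((a+b)*g)) := by
    have w1 : (e*(q*c*p))*g = e*(c*g) := by
      calc (e*(q*c*p))*g = e*(q*(c*(p*g))) := by simp only [mul_assoc]
      _ = e*(q*(c*g)) := by rw [hpg]
      _ = e*(c*g) := by rw [hqcg]
    have w2 : (aD*(1-q))*g = 0 := by
      calc (aD*(1-q))*g = aD*((1-q)*g) := by rw [mul_assoc]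
      _ = aD*(g - q*g) := by rw [sub_mul, one_mul]
      _ = 0 := by rw [hqg, sub_self, mul_zero]
    have w3 : ((1-p)*bD)*g = 0 := by
      calc ((1-p)*bD)*g = (1-p)*(p*bD) := by rw [mul_assoc, hbdg]
      _ = p*bD - p*(p*bD) := by rw [sub_mul, one_mul]
      _ = 0 := by rw [← mul_assoc, hpp, sub_self]
    calc W*g = (e*(q*c*p))*g + (aD*(1-q))*g + ((1-p)*bD)*g := by rw [hW, add_mul, add_mul]
    _ = e*(c*g) + 0 + 0 := by rw [w1, w2, w3]
    _ = e*((3*a^2-1)*((a+b)*g)) := by rw [hcg, add_zero, add_zero]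
  have hgV : g*((3*a^2-1)*((a+b)*g)) = (3*a^2-1)*((a+b)*g) := by
    simp only [mul_add, add_mul, mul_sub, sub_mul, mul_one, one_mul, pow_two, mul_assoc]
    simp only [hnum3, Rg_a, Rg_b, hgg]
  have hgs1 : g*(a+b) = (a+b)*g := by rw [mul_add, add_mul, hga, hgb]
  have hgsg : g*((a+b)*g) = (a+b)*g := by rw [← mul_assoc, hgs1, mul_assoc, hgg]
  -- index bookkeeping
  obtain ⟨K, hKdef⟩ : ∃ K : ℕ, K = max ka kb + 1 := ⟨_, rfl⟩
  have hKa : ka ≤ 2*K := by omega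
  have hKb : kb ≤ 2*K := by omega
  have hKa1 : ka ≤ K := by omega
  have hKb1 : kb ≤ K := by omega
  -- component g
  have hc1 : ((a+b)*W)*g = (W*(a+b))*g := by
    have lhs : ((a+b)*W)*g = e*((a+b)*((3*a^2-1)*((a+b)*g))) := by
      calc ((a+b)*W)*g = (a+b)*(W*g) := by rw [mul_assoc]
      _ = (a+b)*(e*((3*a^2-1)*((a+b)*g))) := by rw [hWg]
      _ = e*((a+b)*((3*a^2-1)*((a+b)*g))) := emid _ _
    have rhs : (W*(a+b))*g = e*(((3*a^2-1)*((a+b)*g))*((a+b)*g)) := by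
      calc (W*(a+b))*g = W*((a+b)*g) := by rw [mul_assoc]
      _ = W*(g*((a+b)*g)) := by rw [hgsg]
      _ = (W*g)*((a+b)*g) := by rw [← mul_assoc]
      _ = (e*((3*a^2-1)*((a+b)*g)))*((a+b)*g) := by rw [hWg]
      _ = e*(((3*a^2-1)*((a+b)*g))*((a+b)*g)) := by rw [mul_assoc]
    rw [lhs, rhs, I1]
  have hw1 : ((W*(a+b))*W)*g = W*g := by
    have hgSV : g*((a+b)*((3*a^2-1)*((a+b)*g))) = (a+b)*((3*a^2-1)*((a+b)*g)) := by
      rw [← mul_assoc, hgs1, mul_assoc, hgV]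
    calc ((W*(a+b))*W)*g = W*((a+b)*(W*g)) := by simp only [mul_assoc]
    _ = W*((a+b)*(e*((3*a^2-1)*((a+b)*g)))) := by rw [hWg]
    _ = W*(e*((a+b)*((3*a^2-1)*((a+b)*g)))) := by rw [emid]
    _ = e*(W*((a+b)*((3*a^2-1)*((a+b)*g)))) := emid _ _
    _ = e*(W*(g*((a+b)*((3*a^2-1)*((a+b)*g))))) := by rw [hgSV]
    _ = e*((W*g)*((a+b)*((3*a^2-1)*((a+b)*g)))) := by rw [← mul_assoc W g]
    _ = e*((e*((3*a^2-1)*((a+b)*g)))*((a+b)*((3*a^2-1)*((a+b)*g)))) := by rw [hWg]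
    _ = e*(e*(((3*a^2-1)*((a+b)*g))*((a+b)*((3*a^2-1)*((a+b)*g))))) := by rw [mul_assoc]
    _ = e*(e*(8*((3*a^2-1)*((a+b)*g)))) := by rw [I2]
    _ = e*((e*8)*((3*a^2-1)*((a+b)*g))) := by rw [← mul_assoc e 8]
    _ = e*((3*a^2-1)*((a+b)*g)) := by rw [he8, one_mul]
    _ = W*g := hWg.symm
  have hpow1 : ((a+b)^(2*K+1)*W)*g = (a+b)^(2*K)*g := by
    have hsplit : (a+b)^(2*K+1) = (a+b)^(2*K-1)*((a+b)*(a+b)) := by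
      rw [← pow_two, ← pow_add, show (2*K-1)+2 = 2*K+1 by omega]
    calc ((a+b)^(2*K+1)*W)*g = (a+b)^(2*K+1)*(W*g) := by rw [mul_assoc]
    _ = (a+b)^(2*K+1)*(e*((3*a^2-1)*((a+b)*g))) := by rw [hWg]
    _ = e*((a+b)^(2*K+1)*((3*a^2-1)*((a+b)*g))) := emid _ _
    _ = e*(((a+b)^(2*K-1)*((a+b)*(a+b)))*((3*a^2-1)*((a+b)*g))) := by rw [hsplit]
    _ = e*((a+b)^(2*K-1)*((a+b)*((a+b)*((3*a^2-1)*((a+b)*g))))) := by simp only [mul_assoc]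
    _ = e*((a+b)^(2*K-1)*(8*((a+b)*g))) := by rw [I3]
    _ = e*(8*((a+b)^(2*K-1)*((a+b)*g))) := by rw [hnum8]
    _ = (e*8)*((a+b)^(2*K-1)*((a+b)*g)) := by rw [← mul_assoc]
    _ = (a+b)^(2*K-1)*((a+b)*g) := by rw [he8, one_mul]
    _ = ((a+b)^(2*K-1)*(a+b))*g := by rw [← mul_assoc]
    _ = (a+b)^((2*K-1)+1)*g := by rw [← pow_succ]
    _ = (a+b)^(2*K)*g := by rw [show (2*K-1)+1 = 2*K by omega]
  -- component p - g
  have hma : (p-g)*a = a*(p-g) := by rw [sub_mul, mul_sub, hpa, hga]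
  have hpm2 : p*(p-g) = p-g := by rw [mul_sub, hpp, hpg]
  have hqm2 : q*(p-g) = 0 := by rw [mul_sub, hqp, hqg, sub_self]
  have hWm2 : W*(p-g) = aD*(p-g) := by
    have w1 : (e*(q*c*p))*(p-g) = 0 := by
      calc (e*(q*c*p))*(p-g) = e*(q*(c*(p*(p-g)))) := by simp only [mul_assoc]
      _ = e*(q*(c*(p-g))) := by rw [hpm2]
      _ = e*((c*q)*(p-g)) := by rw [← mul_assoc q c, hqc]
      _ = e*(c*(q*(p-g))) := by rw [mul_assoc]
      _ = 0 := by rw [hqm2, mul_zero, mul_zero]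
    have w2 : (aD*(1-q))*(p-g) = aD*(p-g) := by
      calc (aD*(1-q))*(p-g) = aD*((1-q)*(p-g)) := by rw [mul_assoc]
      _ = aD*((p-g) - q*(p-g)) := by rw [sub_mul, one_mul]
      _ = aD*(p-g) := by rw [hqm2, sub_zero]
    have w3 : ((1-p)*bD)*(p-g) = 0 := by
      have hz : bD*(p-g) = 0 := by rw [mul_sub, ← hpy, hbdg, sub_self]
      rw [mul_assoc, hz, mul_zero]
    calc W*(p-g) = (e*(q*c*p))*(p-g) + (aD*(1-q))*(p-g) + ((1-p)*bD)*(p-g) := by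
          rw [hW, add_mul, add_mul]
    _ = aD*(p-g) := by rw [w1, w2, w3, zero_add, add_zero]
  have hbxm2 : b*(aD*(p-g)) = 0 := by
    rw [← mul_assoc, hbx, mul_assoc, hbm, mul_zero]
  have hSm2 : (a+b)*(p-g) = a*(p-g) := by rw [add_mul, hbm, add_zero]
  have hSxm2 : (a+b)*(aD*(p-g)) = p-g := by
    rw [add_mul, hbxm2, add_zero, ← mul_assoc, ← hp, hpm2]
  have hc2 : ((a+b)*W)*(p-g) = (W*(a+b))*(p-g) := by
    have l : ((a+b)*W)*(p-g) = p-g := by rw [mul_assoc, hWm2, hSxm2]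
    have r : (W*(a+b))*(p-g) = p-g := by
      calc (W*(a+b))*(p-g) = W*((a+b)*(p-g)) := by rw [mul_assoc]
      _ = W*(a*(p-g)) := by rw [hSm2]
      _ = W*((p-g)*a) := by rw [hma]
      _ = (W*(p-g))*a := by rw [← mul_assoc]
      _ = (aD*(p-g))*a := by rw [hWm2]
      _ = aD*(a*(p-g)) := by rw [mul_assoc, hma]
      _ = p*(p-g) := by rw [← mul_assoc, ← hax, ← hp]
      _ = p-g := hpm2
    rw [l, r]
  have hw2 : ((W*(a+b))*W)*(p-g) = W*(p-g) := by
    calc ((W*(a+b))*W)*(p-g) = W*((a+b)*(W*(p-g))) := by simp only [mul_assoc]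
    _ = W*((a+b)*(aD*(p-g))) := by rw [hWm2]
    _ = W*(p-g) := by rw [hSxm2]
  have hsn2x : ∀ n : ℕ, (a+b)^n*(aD*(p-g)) = a^n*(aD*(p-g)) := by
    intro n
    induction n with
    | zero => simp
    | succ n ih =>
      calc (a+b)^(n+1)*(aD*(p-g)) = (a+b)*((a+b)^n*(aD*(p-g))) := by rw [pow_succ', mul_assoc]
      _ = (a+b)*(a^n*(aD*(p-g))) := by rw [ih]
      _ = a*(a^n*(aD*(p-g))) + b*(a^n*(aD*(p-g))) := by rw [add_mul]
      _ = a*(a^n*(aD*(p-g))) + a^(3*n)*(b*(aD*(p-g))) := by rw [← mul_assoc b, mba n, mul_assoc]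
      _ = a*(a^n*(aD*(p-g))) := by rw [hbxm2, mul_zero, add_zero]
      _ = a^(n+1)*(aD*(p-g)) := by rw [← mul_assoc, ← pow_succ']
  have hsn2 : ∀ n : ℕ, (a+b)^n*(p-g) = a^n*(p-g) := by
    intro n
    induction n with
    | zero => simp
    | succ n ih =>
      calc (a+b)^(n+1)*(p-g) = (a+b)*((a+b)^n*(p-g)) := by rw [pow_succ', mul_assoc]
      _ = (a+b)*(a^n*(p-g)) := by rw [ih]
      _ = a*(a^n*(p-g)) + b*(a^n*(p-g)) := by rw [add_mul]
      _ = a*(a^n*(p-g)) + a^(3*n)*(b*(p-g)) := by rw [← mul_assoc b, mba n, mul_assoc]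
      _ = a*(a^n*(p-g)) := by rw [hbm, mul_zero, add_zero]
      _ = a^(n+1)*(p-g) := by rw [← mul_assoc, ← pow_succ']
  have hpow2 : ((a+b)^(2*K+1)*W)*(p-g) = (a+b)^(2*K)*(p-g) := by
    calc ((a+b)^(2*K+1)*W)*(p-g) = (a+b)^(2*K+1)*(W*(p-g)) := by rw [mul_assoc]
    _ = (a+b)^(2*K+1)*(aD*(p-g)) := by rw [hWm2]
    _ = a^(2*K+1)*(aD*(p-g)) := hsn2x _
    _ = (a^(2*K+1)*aD)*(p-g) := by rw [← mul_assoc]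
    _ = a^(2*K)*(p-g) := by rw [hsa (2*K) hKa]
    _ = (a+b)^(2*K)*(p-g) := (hsn2 _).symm
  -- component q - g
  have hmb3 : (q-g)*b = b*(q-g) := by rw [sub_mul, mul_sub, hqb, hgb]
  have hqm3 : q*(q-g) = q-g := by rw [mul_sub, hqq, hqg]
  have hpm3 : p*(q-g) = 0 := by rw [mul_sub, hpq', hpg, sub_self]
  have hbdm3 : bD*(q-g) = bD - p*bD := by rw [mul_sub, hyq, hbdg]
  have hWm3 : W*(q-g) = bD*(q-g) := by
    have w1 : (e*(q*c*p))*(q-g) = 0 := by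
      calc (e*(q*c*p))*(q-g) = e*(q*(c*(p*(q-g)))) := by simp only [mul_assoc]
      _ = 0 := by rw [hpm3, mul_zero, mul_zero, mul_zero]
    have w2 : (aD*(1-q))*(q-g) = 0 := by
      calc (aD*(1-q))*(q-g) = aD*((1-q)*(q-g)) := by rw [mul_assoc]
      _ = aD*((q-g) - q*(q-g)) := by rw [sub_mul, one_mul]
      _ = 0 := by rw [hqm3, sub_self, mul_zero]
    have w3 : ((1-p)*bD)*(q-g) = bD*(q-g) := by
      calc ((1-p)*bD)*(q-g) = (1-p)*(bD*(q-g)) := by rw [mul_assoc]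
      _ = (1-p)*(bD - p*bD) := by rw [hbdm3]
      _ = (bD - p*bD) - p*(bD - p*bD) := by rw [sub_mul, one_mul]
      _ = bD - p*bD := by rw [mul_sub, ← mul_assoc, hpp, sub_self, sub_zero]
      _ = bD*(q-g) := hbdm3.symm
    calc W*(q-g) = (e*(q*c*p))*(q-g) + (aD*(1-q))*(q-g) + ((1-p)*bD)*(q-g) := by
          rw [hW, add_mul, add_mul]
    _ = bD*(q-g) := by rw [w1, w2, w3, zero_add, zero_add]
  have haym3 : a*(bD*(q-g)) = 0 := by
    rw [← mul_assoc, hay, mul_assoc, ham, mul_zero]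
  have hSm3 : (a+b)*(q-g) = b*(q-g) := by rw [add_mul, ham, zero_add]
  have hSym3 : (a+b)*(bD*(q-g)) = q-g := by
    rw [add_mul, haym3, zero_add, ← mul_assoc, ← hq, hqm3]
  have hc3 : ((a+b)*W)*(q-g) = (W*(a+b))*(q-g) := by
    have l : ((a+b)*W)*(q-g) = q-g := by rw [mul_assoc, hWm3, hSym3]
    have r : (W*(a+b))*(q-g) = q-g := by
      calc (W*(a+b))*(q-g) = W*((a+b)*(q-g)) := by rw [mul_assoc]
      _ = W*(b*(q-g)) := by rw [hSm3]
      _ = W*((q-g)*b) := by rw [hmb3]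
      _ = (W*(q-g))*b := by rw [← mul_assoc]
      _ = (bD*(q-g))*b := by rw [hWm3]
      _ = bD*(b*(q-g)) := by rw [mul_assoc, hmb3]
      _ = q*(q-g) := by rw [← mul_assoc, ← hby, ← hq]
      _ = q-g := hqm3
    rw [l, r]
  have hw3 : ((W*(a+b))*W)*(q-g) = W*(q-g) := by
    calc ((W*(a+b))*W)*(q-g) = W*((a+b)*(W*(q-g))) := by simp only [mul_assoc]
    _ = W*((a+b)*(bD*(q-g))) := by rw [hWm3]
    _ = W*(q-g) := by rw [hSym3]
  have hsn3x : ∀ n : ℕ, (a+b)^n*(bD*(q-g)) = b^n*(bD*(q-g)) := by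
    intro n
    induction n with
    | zero => simp
    | succ n ih =>
      calc (a+b)^(n+1)*(bD*(q-g)) = (a+b)*((a+b)^n*(bD*(q-g))) := by rw [pow_succ', mul_assoc]
      _ = (a+b)*(b^n*(bD*(q-g))) := by rw [ih]
      _ = a*(b^n*(bD*(q-g))) + b*(b^n*(bD*(q-g))) := by rw [add_mul]
      _ = b^(3*n)*(a*(bD*(q-g))) + b*(b^n*(bD*(q-g))) := by rw [← mul_assoc a, mab n, mul_assoc]
      _ = b*(b^n*(bD*(q-g))) := by rw [haym3, mul_zero, zero_add]
      _ = b^(n+1)*(bD*(q-g)) := by rw [← mul_assoc, ← pow_succ']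
  have hsn3 : ∀ n : ℕ, (a+b)^n*(q-g) = b^n*(q-g) := by
    intro n
    induction n with
    | zero => simp
    | succ n ih =>
      calc (a+b)^(n+1)*(q-g) = (a+b)*((a+b)^n*(q-g)) := by rw [pow_succ', mul_assoc]
      _ = (a+b)*(b^n*(q-g)) := by rw [ih]
      _ = a*(b^n*(q-g)) + b*(b^n*(q-g)) := by rw [add_mul]
      _ = b^(3*n)*(a*(q-g)) + b*(b^n*(q-g)) := by rw [← mul_assoc a, mab n, mul_assoc]
      _ = b*(b^n*(q-g)) := by rw [ham, mul_zero, zero_add]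
      _ = b^(n+1)*(q-g) := by rw [← mul_assoc, ← pow_succ']
  have hpow3 : ((a+b)^(2*K+1)*W)*(q-g) = (a+b)^(2*K)*(q-g) := by
    calc ((a+b)^(2*K+1)*W)*(q-g) = (a+b)^(2*K+1)*(W*(q-g)) := by rw [mul_assoc]
    _ = (a+b)^(2*K+1)*(bD*(q-g)) := by rw [hWm3]
    _ = b^(2*K+1)*(bD*(q-g)) := hsn3x _
    _ = (b^(2*K+1)*bD)*(q-g) := by rw [← mul_assoc]
    _ = b^(2*K)*(q-g) := by rw [hsb (2*K) hKb]
    _ = (a+b)^(2*K)*(q-g) := (hsn3 _).symm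
  -- component 1 - p - q + g
  have hpg4 : p*(1-p-q+g) = 0 := by
    rw [mul_add, mul_sub, mul_sub, mul_one, hpp, hpq', hpg]
    abel
  have hqg4 : q*(1-p-q+g) = 0 := by
    rw [mul_add, mul_sub, mul_sub, mul_one, hqp, hqq, hqg]
    abel
  have hxg4 : aD*g = aD*q := by rw [hg, ← mul_assoc, hxp]
  have hxg4' : aD*(1-p-q+g) = 0 := by
    rw [mul_add, mul_sub, mul_sub, mul_one, hxp, hxg4]
    abel
  have hyg4 : bD*(1-p-q+g) = 0 := by
    rw [mul_add, mul_sub, mul_sub, mul_one, ← hpy, hyq, hbdg]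
    abel
  have hWg4 : W*(1-p-q+g) = 0 := by
    have w1 : (e*(q*c*p))*(1-p-q+g) = 0 := by
      calc (e*(q*c*p))*(1-p-q+g) = e*(q*(c*(p*(1-p-q+g)))) := by simp only [mul_assoc]
      _ = 0 := by rw [hpg4, mul_zero, mul_zero, mul_zero]
    have w2 : (aD*(1-q))*(1-p-q+g) = 0 := by
      calc (aD*(1-q))*(1-p-q+g) = aD*((1-p-q+g) - q*(1-p-q+g)) := by
            rw [mul_assoc, sub_mul, one_mul]
      _ = aD*(1-p-q+g) := by rw [hqg4, sub_zero]
      _ = 0 := hxg4'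
    have w3 : ((1-p)*bD)*(1-p-q+g) = 0 := by
      rw [mul_assoc, hyg4, mul_zero]
    calc W*(1-p-q+g)
        = (e*(q*c*p))*(1-p-q+g) + (aD*(1-q))*(1-p-q+g) + ((1-p)*bD)*(1-p-q+g) := by
          rw [hW, add_mul, add_mul]
    _ = 0 := by rw [w1, w2, w3, add_zero, add_zero]
  have hg4a : (1-p-q+g)*a = a*(1-p-q+g) := by
    simp only [add_mul, sub_mul, mul_add, mul_sub, one_mul, mul_one]
    rw [hpa, hqa', hga]
  have hg4b : (1-p-q+g)*b = b*(1-p-q+g) := by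
    simp only [add_mul, sub_mul, mul_add, mul_sub, one_mul, mul_one]
    rw [← hpb, hqb, hgb]
  have hg4S : (1-p-q+g)*(a+b) = (a+b)*(1-p-q+g) := by
    rw [mul_add (1-p-q+g) a b, hg4a, hg4b, ← add_mul]
  have haKg : a^K*g = a^K*q := by rw [hg, ← mul_assoc, hanp K (by omega)]
  have haf4 : a^K*(1-p-q+g) = 0 := by
    rw [mul_add, mul_sub, mul_sub, mul_one, hanp K (by omega), haKg]
    abel
  have hbKg : b^K*g = b^K*p := by
    rw [hg, ← mul_assoc, ← hpbn, mul_assoc, hbnq K (by omega), hpbn]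
  have hbf4 : b^K*(1-p-q+g) = 0 := by
    rw [mul_add, mul_sub, mul_sub, mul_one, hbnq K (by omega), hbKg]
    abel
  have hnil : (a+b)^(2*K)*(1-p-q+g) = 0 :=
    h_nilp a b (1-p-q+g) K hg4b hba haf4 hbf4
  have hc4 : ((a+b)*W)*(1-p-q+g) = (W*(a+b))*(1-p-q+g) := by
    have l : ((a+b)*W)*(1-p-q+g) = 0 := by rw [mul_assoc, hWg4, mul_zero]
    have r : (W*(a+b))*(1-p-q+g) = 0 := by
      rw [mul_assoc, ← hg4S, ← mul_assoc, hWg4, zero_mul]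
    rw [l, r]
  have hw4 : ((W*(a+b))*W)*(1-p-q+g) = W*(1-p-q+g) := by
    calc ((W*(a+b))*W)*(1-p-q+g) = (W*(a+b))*(W*(1-p-q+g)) := by rw [mul_assoc]
    _ = (W*(a+b))*0 := by rw [hWg4]
    _ = W*(1-p-q+g) := by rw [mul_zero, hWg4]
  have hpow4 : ((a+b)^(2*K+1)*W)*(1-p-q+g) = (a+b)^(2*K)*(1-p-q+g) := by
    rw [mul_assoc, hWg4, mul_zero, hnil]
  -- assembly
  have hsum : g + (p - g) + (q - g) + (1 - p - q + g) = 1 := by abel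
  have combine : ∀ u v : R, u*g = v*g → u*(p-g) = v*(p-g) → u*(q-g) = v*(q-g) →
      u*(1-p-q+g) = v*(1-p-q+g) → u = v := by
    intro u v e1 e2 e3 e4
    calc u = u*(g + (p-g) + (q-g) + (1-p-q+g)) := by rw [hsum, mul_one]
    _ = u*g + u*(p-g) + u*(q-g) + u*(1-p-q+g) := by rw [mul_add, mul_add, mul_add]
    _ = v*g + v*(p-g) + v*(q-g) + v*(1-p-q+g) := by rw [e1, e2, e3, e4]
    _ = v*(g + (p-g) + (q-g) + (1-p-q+g)) := by
          rw [mul_add v (g+(p-g)+(q-g)), mul_add v (g+(p-g)), mul_add v g]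
    _ = v := by rw [hsum, mul_one]
  have final2 : (a+b)*W = W*(a+b) := combine _ _ hc1 hc2 hc3 hc4
  have final1 : W*(a+b)*W = W := combine _ _ hw1 hw2 hw3 hw4
  have final3 : (a+b)^(2*K+1)*W = (a+b)^(2*K) := combine _ _ hpow1 hpow2 hpow3 hpow4
  rw [← hp, ← hq, ← hc, ← hW]
  exact ⟨final1, final2, 2*K, final3⟩
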